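/- List Scheduling is value-monotone: for any m ≥ 2 and input sequences x, y of the same length n with x_i ≥ y_i for all i, the maximum bin sum of LS(x, m) is at least the maximum bin sum of LS(y, m), and the minimum bin sum of LS(x, m) is at least the minimum bin sum of LS(y, m). -/

import Mathlib

open scoped Classical

/-- The bin chosen by List Scheduling: the smallest-index bin with minimal current sum. -/
noncomputable def lsIndex {m : ℕ} (hm : 0 < m) (v : Fin m → ℝ) : Fin m :=
  (Finset.univ.filter fun i => ∀ j, v i ≤ v j).min' (by
    obtain ⟨i, -, hi⟩ := Finset.exists_min_image Finset.univ v ⟨⟨0, hm⟩, Finset.mem_univ _⟩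
    exact ⟨i, Finset.mem_filter.mpr ⟨Finset.mem_univ _, fun j => hi j (Finset.mem_univ _)⟩⟩)

/-- One step of List Scheduling: place `x` into the chosen bin. -/
noncomputable def lsStep {m : ℕ} (hm : 0 < m) (v : Fin m → ℝ) (x : ℝ) : Fin m → ℝ :=
  Function.update v (lsIndex hm v) (v (lsIndex hm v) + x)

/-- The vector of bin sums after List Scheduling processes the list `xs` into `m` bins. -/
noncomputable def lsSums {m : ℕ} (hm : 0 < m) (xs : List ℝ) : Fin m → ℝ :=
  xs.foldl (lsStep hm) (fun _ => 0)

/-- `s` dominates `t` iff some permutation `π` satisfies `s (π i) ≥ t i` for all `i`. -/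
def Dominates {m : ℕ} (s t : Fin m → ℝ) : Prop :=
  ∃ π : Equiv.Perm (Fin m), ∀ i, t i ≤ s (π i)

lemma lsIndex_min {m : ℕ} (hm : 0 < m) (v : Fin m → ℝ) (j : Fin m) :
    v (lsIndex hm v) ≤ v j := by
  have h : lsIndex hm v ∈ Finset.univ.filter fun i => ∀ j, v i ≤ v j :=
    Finset.min'_mem _ _
  exact (Finset.mem_filter.mp h).2 j

lemma step_dom {m : ℕ} (hm : 0 < m) {s t : Fin m → ℝ} (h : Dominates s t)
    {a b : ℝ} (hb : 0 ≤ b) (hba : b ≤ a) :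
    Dominates (lsStep hm s a) (lsStep hm t b) := by
  obtain ⟨π, hπ⟩ := h
  set is := lsIndex hm s with his
  set it := lsIndex hm t with hit
  set j := π⁻¹ is with hj
  have hπj : π j = is := Equiv.apply_symm_apply π is
  have ha : 0 ≤ a := le_trans hb hba
  have hs' : ∀ k, s k ≤ lsStep hm s a k := by
    intro k
    unfold lsStep
    rcases eq_or_ne k is with rfl | hk
    · rw [← his, Function.update_self]; linarith
    · rw [← his, Function.update_of_ne hk]
  refine ⟨π * Equiv.swap it j, fun i => ?_⟩
  have happ : (π * Equiv.swap it j) i = π (Equiv.swap it j i) := rfl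
  rcases eq_or_ne i it with rfl | hi
  · -- i = it
    rw [happ, Equiv.swap_apply_left, hπj]
    have h1 : lsStep hm t b it = t it + b := by
      unfold lsStep; rw [← hit, Function.update_self]
    have h2 : lsStep hm s a is = s is + a := by
      unfold lsStep; rw [← his, Function.update_self]
    rw [h1, h2]
    have h3 : t it ≤ t j := lsIndex_min hm t j
    have h4 : t j ≤ s is := by rw [← hπj]; exact hπ j
    linarith
  · rcases eq_or_ne i j with hij | hij
    · -- i = j ≠ it
      rw [happ, hij, Equiv.swap_apply_right, ← hij]
      have h1 : lsStep hm t b i = t i := by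
        unfold lsStep; rw [← hit, Function.update_of_ne hi]
      rw [h1]
      have h2 : t i ≤ s is := by rw [← hπj, ← hij]; exact hπ i
      have h3 : s is ≤ s (π it) := lsIndex_min hm s (π it)
      exact le_trans (le_trans h2 h3) (hs' (π it))
    · rw [happ, Equiv.swap_apply_of_ne_of_ne hi hij]
      have h1 : lsStep hm t b i = t i := by
        unfold lsStep; rw [← hit, Function.update_of_ne hi]
      rw [h1]
      exact le_trans (hπ i) (hs' (π i))

lemma fold_dom {m : ℕ} (hm : 0 < m) :
    ∀ {ys xs : List ℝ}, List.Forall₂ (fun b a => 0 ≤ b ∧ b ≤ a) ys xs →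
      ∀ {s t : Fin m → ℝ}, Dominates s t →
      Dominates (xs.foldl (lsStep hm) s) (ys.foldl (lsStep hm) t) := by
  intro ys xs hf
  induction hf with
  | nil => intro s t h; exact h
  | cons hab _ ih =>
      intro s t h
      exact ih (step_dom hm h hab.1 hab.2)

/-- List Scheduling is value-monotone: if every input weakly increases, then both the
maximum bin sum and the minimum bin sum of the LS output weakly increase. -/
theorem ls_value_monotone {m n : ℕ} (hm : 2 ≤ m) (x y : Fin n → ℝ)
    (hpos : ∀ i, 0 < y i) (hxy : ∀ i, y i ≤ x i)
    (hne : (Finset.univ : Finset (Fin m)).Nonempty := ⟨⟨0, by omega⟩, Finset.mem_univ _⟩) :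
    Finset.univ.sup' hne (lsSums (by omega : 0 < m) (List.ofFn y)) ≤
      Finset.univ.sup' hne (lsSums (by omega : 0 < m) (List.ofFn x)) ∧
    Finset.univ.inf' hne (lsSums (by omega : 0 < m) (List.ofFn y)) ≤
      Finset.univ.inf' hne (lsSums (by omega : 0 < m) (List.ofFn x)) := by
  have hm' : 0 < m := by omega
  have hf : List.Forall₂ (fun b a => 0 ≤ b ∧ b ≤ a) (List.ofFn y) (List.ofFn x) := by
    rw [List.forall₂_iff_get]
    refine ⟨by simp, fun i h1 h2 => ?_⟩
    simp only [List.get_eq_getElem, List.getElem_ofFn]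
    exact ⟨(hpos _).le, hxy _⟩
  have hdom : Dominates (lsSums hm' (List.ofFn x)) (lsSums hm' (List.ofFn y)) :=
    fold_dom hm' hf ⟨1, fun i => le_refl _⟩
  obtain ⟨π, hπ⟩ := hdom
  constructor
  · apply Finset.sup'_le
    intro i _
    exact le_trans (hπ i) (Finset.le_sup' _ (Finset.mem_univ _))
  · apply Finset.le_inf'
    intro i _
    have := hπ (π⁻¹ i)
    rw [Equiv.Perm.inv_def, Equiv.apply_symm_apply] at this
    exact le_trans (Finset.inf'_le _ (Finset.mem_univ _)) this
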